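/- Let y be a Hamiltonian cycle on n vertices and B ∈ ℤ^{n²} a vector of the form B⁺ − B⁻ with B⁺, B⁻ ∈ {0,1}^{n²}, ⟨B⁺,B⁻⟩ = 0 and ⟨B⁺, 1⟩ = ⟨B⁻, 1⟩ = 1 (i.e. B compares two single arc costs). Then the strict inequality ⟨B, C⟩ > 0 is compatible with C ∈ K(y): there exists C with ⟨B,C⟩ > 0 and y uniquely optimal for C. -/
import Mathlib


/-- A directed Hamiltonian cycle (tour) on `n` vertices, identified with its
characteristic 0/1-matrix: `x i j = 1` iff the arc `(i,j)` is in the cycle. -/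
def IsTour (n : ℕ) (x : Fin n → Fin n → ℤ) : Prop :=
  ∃ σ : Equiv.Perm (Fin n), σ.IsCycle ∧ σ.support = Finset.univ ∧
    ∀ i j, x i j = if σ i = j then 1 else 0

/-- Standard inner product of two `n × n` integer matrices/vectors. -/
def ip {n : ℕ} (x C : Fin n → Fin n → ℤ) : ℤ :=
  ∑ i, ∑ j, x i j * C i j

lemma ip_prod {n : ℕ} (x C : Fin n → Fin n → ℤ) :
    ip x C = ∑ p : Fin n × Fin n, x p.1 p.2 * C p.1 p.2 := by
  rw [ip, Fintype.sum_prod_type]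

lemma extract {n : ℕ} (B : Fin n → Fin n → ℤ)
    (h01 : ∀ i j, B i j = 0 ∨ B i j = 1)
    (h1 : ip B (fun _ _ => 1) = 1) :
    ∃ p : Fin n × Fin n, B p.1 p.2 = 1 ∧ ∀ q, q ≠ p → B q.1 q.2 = 0 := by
  have hsum : ∑ p : Fin n × Fin n, B p.1 p.2 = 1 := by
    rw [ip_prod] at h1; simpa using h1
  have hex : ∃ p : Fin n × Fin n, B p.1 p.2 = 1 := by
    by_contra h
    push_neg at h
    have : ∀ p : Fin n × Fin n, B p.1 p.2 = 0 := by
      intro p; rcases h01 p.1 p.2 with h0 | h0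
      · exact h0
      · exact absurd h0 (h p)
    simp [Finset.sum_congr rfl fun p _ => this p] at hsum
  obtain ⟨p, hp⟩ := hex
  refine ⟨p, hp, fun q hq => ?_⟩
  rcases h01 q.1 q.2 with h0 | h0
  · exact h0
  · exfalso
    have hle : ({p, q} : Finset (Fin n × Fin n)).sum (fun r => B r.1 r.2) ≤
        ∑ r : Fin n × Fin n, B r.1 r.2 := by
      apply Finset.sum_le_sum_of_subset_of_nonneg (Finset.subset_univ _)
      intro r _ _
      rcases h01 r.1 r.2 with h' | h' <;> omega
    rw [Finset.sum_pair (Ne.symm hq), hp, h0, hsum] at hle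
    omega

lemma ip_indicator {n : ℕ} (B : Fin n → Fin n → ℤ) (p : Fin n × Fin n)
    (hp : B p.1 p.2 = 1) (h0 : ∀ q, q ≠ p → B q.1 q.2 = 0)
    (C : Fin n → Fin n → ℤ) : ip B C = C p.1 p.2 := by
  rw [ip_prod]
  rw [Finset.sum_eq_single p]
  · rw [hp, one_mul]
  · intro q _ hq; rw [h0 q hq, zero_mul]
  · intro h; exact absurd (Finset.mem_univ p) h

lemma ip_tour {n : ℕ} (x : Fin n → Fin n → ℤ) (ρ : Equiv.Perm (Fin n))
    (hx : ∀ i j, x i j = if ρ i = j then 1 else 0) (C : Fin n → Fin n → ℤ) :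
    ip x C = ∑ i, C i (ρ i) := by
  unfold ip
  refine Finset.sum_congr rfl fun i _ => ?_
  have : ∀ j, x i j * C i j = if ρ i = j then C i j else 0 := by
    intro j; rw [hx]; split_ifs <;> ring
  rw [Finset.sum_congr rfl fun j _ => this j, Finset.sum_ite_eq]
  simp

theorem stmt17 (n : ℕ) (y Bp Bm : Fin n → Fin n → ℤ)
    (hy : IsTour n y)
    (hBp : ∀ i j, Bp i j = 0 ∨ Bp i j = 1)
    (hBm : ∀ i j, Bm i j = 0 ∨ Bm i j = 1)
    (horth : ip Bp Bm = 0)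
    (hp1 : ip Bp (fun _ _ => 1) = 1)
    (hm1 : ip Bm (fun _ _ => 1) = 1) :
    ∃ C : Fin n → Fin n → ℤ,
      0 < ip Bp C - ip Bm C ∧
      ∀ x : Fin n → Fin n → ℤ, IsTour n x → x ≠ y → ip y C < ip x C := by
  obtain ⟨σ, hσc, hσs, hyσ⟩ := hy
  obtain ⟨pp, hpp1, hpp0⟩ := extract Bp hBp hp1
  obtain ⟨qq, hqq1, hqq0⟩ := extract Bm hBm hm1
  have hpq : pp ≠ qq := by
    intro h
    rw [ip_indicator Bp pp hpp1 hpp0 Bm, h, hqq1] at horth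
    exact one_ne_zero horth
  set C : Fin n → Fin n → ℤ := fun i j =>
    2 - 2 * y i j + (if (i, j) = pp then 1 else 0)
      - 2 * (if (i, j) = qq then 1 else 0) with hC
  refine ⟨C, ?_, ?_⟩
  · rw [ip_indicator Bp pp hpp1 hpp0 C, ip_indicator Bm qq hqq1 hqq0 C]
    have hy01 : ∀ i j, 0 ≤ y i j ∧ y i j ≤ 1 := by
      intro i j; rw [hyσ]; split_ifs <;> omega
    have e1 : C pp.1 pp.2 = 2 - 2 * y pp.1 pp.2 + 1 := by
      simp [hC, hpq]
    have e2 : C qq.1 qq.2 = 2 - 2 * y qq.1 qq.2 - 2 := by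
      simp [hC, Ne.symm hpq]
    have h1 := hy01 pp.1 pp.2
    have h2 := hy01 qq.1 qq.2
    rw [e1, e2]; linarith [h1.1, h1.2, h2.1, h2.2]
  · intro x hx hne
    obtain ⟨τ, hτc, hτs, hxτ⟩ := hx
    have hτσ : τ ≠ σ := by
      intro h; apply hne; funext i j; rw [hxτ, hyσ, h]
    -- number of i where τ i ≠ σ i, as an integer
    set D : ℤ := ∑ i, (if τ i = σ i then (0:ℤ) else 1) with hD
    set S1 : ℤ := ∑ i, (if ((i, τ i) : Fin n × Fin n) = pp then (1:ℤ) else 0) with hS1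
    set S2 : ℤ := ∑ i, (if ((i, σ i) : Fin n × Fin n) = pp then (1:ℤ) else 0) with hS2
    set S3 : ℤ := ∑ i, (if ((i, τ i) : Fin n × Fin n) = qq then (1:ℤ) else 0) with hS3
    set S4 : ℤ := ∑ i, (if ((i, σ i) : Fin n × Fin n) = qq then (1:ℤ) else 0) with hS4
    have hyτ : ∑ i, y i (τ i) = n - D := by
      have : ∀ i : Fin n, y i (τ i) + (if τ i = σ i then (0:ℤ) else 1) = 1 := by
        intro i
        rw [hyσ]
        rcases eq_or_ne (τ i) (σ i) with h | h
        · simp [h]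
        · simp [h, Ne.symm h]
      have hsum : (∑ i, y i (τ i)) + D = n := by
        rw [hD, ← Finset.sum_add_distrib]
        rw [Finset.sum_congr rfl fun i _ => this i]
        simp
      linarith
    have hyσsum : ∑ i, y i (σ i) = n := by
      have : ∀ i : Fin n, y i (σ i) = 1 := by intro i; rw [hyσ]; simp
      rw [Finset.sum_congr rfl fun i _ => this i]; simp
    -- D ≥ 2
    have hD2 : 2 ≤ D := by
      have hex : ∃ i, τ i ≠ σ i := by
        by_contra h
        push_neg at h
        exact hτσ (Equiv.ext h)
      obtain ⟨i, hi⟩ := hex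
      set j := τ.symm (σ i) with hj
      have hτj : τ j = σ i := by rw [hj]; simp
      have hij : i ≠ j := by
        intro h; rw [← h] at hτj; exact hi hτj
      have hjne : τ j ≠ σ j := by
        rw [hτj]; intro h
        exact hij (σ.injective h)
      have hle : ({i, j} : Finset (Fin n)).sum (fun k => if τ k = σ k then (0:ℤ) else 1) ≤ D := by
        apply Finset.sum_le_sum_of_subset_of_nonneg (Finset.subset_univ _)
        intro k _ _; split_ifs <;> omega
      rw [Finset.sum_pair hij] at hle
      rw [if_neg hi, if_neg hjne] at hle
      omega
    -- bounds on S1..S4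
    have hbound : ∀ (ρ : Fin n → Fin n) (r : Fin n × Fin n),
        0 ≤ (∑ i, (if ((i, ρ i) : Fin n × Fin n) = r then (1:ℤ) else 0)) ∧
        (∑ i, (if ((i, ρ i) : Fin n × Fin n) = r then (1:ℤ) else 0)) ≤ 1 := by
      intro ρ r
      constructor
      · apply Finset.sum_nonneg; intro i _; split_ifs <;> omega
      · have hterm : ∀ i : Fin n, (if ((i, ρ i) : Fin n × Fin n) = r then (1:ℤ) else 0) ≤
            (if i = r.1 then 1 else 0) := by
          intro i
          split_ifs with h1 h2
          · omega
          · exact absurd (congrArg Prod.fst h1) h2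
          · omega
          · omega
        calc (∑ i, (if ((i, ρ i) : Fin n × Fin n) = r then (1:ℤ) else 0))
            ≤ ∑ i, (if i = r.1 then (1:ℤ) else 0) := Finset.sum_le_sum fun i _ => hterm i
          _ = 1 := by simp
    have hS1b := hbound τ pp
    have hS2b := hbound σ pp
    have hS3b := hbound τ qq
    have hS4b := hbound σ qq
    have ex : ip x C = 2 * n - 2 * (n - D) + S1 - 2 * S3 := by
      rw [ip_tour x τ hxτ C, hC]
      simp only
      rw [Finset.sum_sub_distrib, Finset.sum_add_distrib, Finset.sum_sub_distrib,
        ← Finset.mul_sum, ← Finset.mul_sum, Finset.sum_const, hyτ]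
      rw [← hS1, ← hS3]
      simp only [Finset.card_univ, Fintype.card_fin]
      ring
    have ey : ip y C = S2 - 2 * S4 := by
      rw [ip_tour y σ hyσ C, hC]
      simp only
      rw [Finset.sum_sub_distrib, Finset.sum_add_distrib, Finset.sum_sub_distrib,
        ← Finset.mul_sum, ← Finset.mul_sum, Finset.sum_const, hyσsum]
      rw [← hS2, ← hS4]
      simp only [Finset.card_univ, Fintype.card_fin]
      ring
    rw [ex, ey]
    linarith [hS1b.1, hS2b.2, hS3b.2, hS4b.1]
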